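/- Let P0, P1 be symmetric positive definite and Q = I - P0^{-1/2} (P0^{1/2} P1 P0^{1/2})^{1/2} P0^{-1/2}. Then the OMT geodesic P_t = ((1-t)P0^{1/2} + t P1^{1/2} U)((1-t)P0^{1/2} + t P1^{1/2} U)' with U = P1^{-1/2} P0^{-1/2} (P0^{1/2} P1 P0^{1/2})^{1/2} satisfies P_t = (I - tQ) P0 (I - tQ) for all t. -/

import Mathlib

open Matrix

/-- The symmetric positive definite square root of a positive definite matrix. -/
noncomputable def sqrtm {n : ℕ} {P : Matrix (Fin n) (Fin n) ℝ} (hP : P.PosDef) :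
    Matrix (Fin n) (Fin n) ℝ :=
  (hP.posSemidef.1.eigenvectorUnitary : Matrix (Fin n) (Fin n) ℝ) *
    diagonal ((↑) ∘ (fun i => √(hP.posSemidef.1.eigenvalues i))) *
    (star hP.posSemidef.1.eigenvectorUnitary : Matrix (Fin n) (Fin n) ℝ)

/-- Squared Frobenius norm of a real matrix. -/
noncomputable def frobSq {n : ℕ} (M : Matrix (Fin n) (Fin n) ℝ) : ℝ := (M * Mᵀ).trace

lemma sqrtm_transpose {n : ℕ} {P : Matrix (Fin n) (Fin n) ℝ} (hP : P.PosDef) :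
    (sqrtm hP)ᵀ = sqrtm hP := by
  rw [← conjTranspose_eq_transpose_of_trivial]
  simp [sqrtm, mul_assoc, Matrix.star_eq_conjTranspose]

lemma sqrtm_mul_self {n : ℕ} {P : Matrix (Fin n) (Fin n) ℝ} (hP : P.PosDef) :
    sqrtm hP * sqrtm hP = P := by
  have hs := hP.posSemidef.1.spectral_theorem
  simp only [Unitary.conjStarAlgAut_apply] at hs
  conv_rhs => rw [hs]
  have hu := Unitary.coe_star_mul_self hP.posSemidef.1.eigenvectorUnitary
  simp only [sqrtm]
  rw [show ∀ a b c d e : Matrix (Fin n) (Fin n) ℝ, a * b * c * (a * d * e) = a * (b * (c * a) * d) * e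
    from fun a b c d e => by noncomm_ring, hu, mul_one, diagonal_mul_diagonal]
  congr 2
  refine congrArg diagonal (funext fun i => ?_)
  have := hP.eigenvalues_pos i
  simp [Real.mul_self_sqrt this.le]

lemma sqrtm_isUnit_det {n : ℕ} {P : Matrix (Fin n) (Fin n) ℝ} (hP : P.PosDef) :
    IsUnit (sqrtm hP).det := by
  have h : (sqrtm hP).det * (sqrtm hP).det = P.det := by
    rw [← det_mul, sqrtm_mul_self]
  refine isUnit_iff_ne_zero.mpr fun h0 => ?_
  rw [h0, mul_zero] at h
  exact hP.det_pos.ne h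

theorem stmt_2 {n : ℕ} {P0 P1 : Matrix (Fin n) (Fin n) ℝ}
    (hP0 : P0.PosDef) (hP1 : P1.PosDef)
    (hS : (sqrtm hP0 * P1 * sqrtm hP0).PosDef)
    (U : Matrix (Fin n) (Fin n) ℝ)
    (hU : U = (sqrtm hP1)⁻¹ * (sqrtm hP0)⁻¹ * sqrtm hS)
    (Q : Matrix (Fin n) (Fin n) ℝ)
    (hQ : Q = 1 - (sqrtm hP0)⁻¹ * sqrtm hS * (sqrtm hP0)⁻¹)
    (P : ℝ → Matrix (Fin n) (Fin n) ℝ)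
    (hP : ∀ t : ℝ, P t = ((1 - t) • sqrtm hP0 + t • (sqrtm hP1 * U)) *
        ((1 - t) • sqrtm hP0 + t • (sqrtm hP1 * U))ᵀ) :
    ∀ t : ℝ, P t = (1 - t • Q) * P0 * (1 - t • Q) := by
  intro t
  set A := sqrtm hP0 with hA
  set B := sqrtm hP1 with hB
  set S := sqrtm hS with hSdef
  have hAt : Aᵀ = A := sqrtm_transpose hP0
  have hSt : Sᵀ = S := sqrtm_transpose hS
  have hAA : A * A = P0 := sqrtm_mul_self hP0
  have hAdet : IsUnit A.det := sqrtm_isUnit_det hP0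
  have hBdet : IsUnit B.det := sqrtm_isUnit_det hP1
  have hAinv : A⁻¹ * A = 1 := nonsing_inv_mul A hAdet
  have hAinv' : A * A⁻¹ = 1 := mul_nonsing_inv A hAdet
  have hBU : B * U = A⁻¹ * S := by
    rw [hU, ← mul_assoc, ← mul_assoc, mul_nonsing_inv B hBdet, one_mul]
  have hAinvT : (A⁻¹)ᵀ = A⁻¹ := by rw [transpose_nonsing_inv, hAt]
  set M : Matrix (Fin n) (Fin n) ℝ := (1 - t) • A + t • (A⁻¹ * S) with hM
  have hMT : Mᵀ = (1 - t) • A + t • (S * A⁻¹) := by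
    simp [hM, transpose_add, transpose_smul, transpose_mul, hAt, hSt, hAinvT]
  rw [← hA] at hQ
  have h1 : (1 - t • Q) * A = M := by
    rw [hQ, hM]
    simp only [smul_sub, sub_mul, add_mul, one_mul, smul_mul_assoc, mul_assoc, hAinv, mul_one,
      sub_smul, one_smul, smul_one]
    abel
  have h2 : A * (1 - t • Q) = Mᵀ := by
    rw [hQ, hMT]
    simp only [smul_sub, mul_sub, mul_one, mul_smul_comm, smul_one, ← mul_assoc, hAinv', one_mul,
      sub_smul, one_smul]
    abel
  rw [hP t, hBU, ← hM, ← hAA, show (1 - t • Q) * (A * A) * (1 - t • Q) =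
    ((1 - t • Q) * A) * (A * (1 - t • Q)) by noncomm_ring, h1, h2]
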